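/- If C ⊆ F_2^n is a tight (k,k)-design (1 ≤ k ≤ n/2), i.e. a (k,k)-design with |C| = ∑_{i=0}^k C(n−1,i), then C contains no pair of antipodal points: if x ∈ C then −x ∉ C. -/

import Mathlib

open Finset

/-- The Krawtchouk polynomials `Q_i^{(n)}(t)`, determined by `Q_0 = 1`, `Q_1 = t` and the
three-term recurrence `n·t·Q_i(t) = (n−i)·Q_{i+1}(t) + i·Q_{i−1}(t)`. -/
noncomputable def kraw (n : ℕ) : ℕ → ℝ → ℝ
  | 0, _ => 1
  | 1, t => t
  | (i+2), t =>
      ((n : ℝ) * t * kraw n (i+1) t - ((i : ℝ) + 1) * kraw n i t) / ((n : ℝ) - ((i : ℝ) + 1))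

/-- The "inner product" `⟨x,y⟩ = 1 − 2 d(x,y)/n`. -/
noncomputable def ip (n : ℕ) (x y : Fin n → ZMod 2) : ℝ :=
  1 - 2 * (hammingDist x y : ℝ) / (n : ℝ)

/-- The `i`-th moment `M_i(C) = ∑_{x,y ∈ C} Q_i^{(n)}(⟨x,y⟩)`. -/
noncomputable def moment (n : ℕ) (C : Finset (Fin n → ZMod 2)) (i : ℕ) : ℝ :=
  ∑ x ∈ C, ∑ y ∈ C, kraw n i (ip n x y)

/-- The antipodal (complement) point `−x`. -/
def antip {n : ℕ} (x : Fin n → ZMod 2) : Fin n → ZMod 2 := fun j => x j + 1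

/-- `C` is a `(k,k)`-design: a nonempty code with `M_i(C) = 0` for all even `i` with `2 ≤ i ≤ 2k`. -/
def IsKKDesign (n k : ℕ) (C : Finset (Fin n → ZMod 2)) : Prop :=
  C.Nonempty ∧ ∀ j : ℕ, 1 ≤ j → j ≤ k → moment n C (2 * j) = 0

/-- `C` is an `m`-design: a nonempty code with `M_i(C) = 0` for all `1 ≤ i ≤ m`. -/
def IsMDesign (n m : ℕ) (C : Finset (Fin n → ZMod 2)) : Prop :=
  C.Nonempty ∧ ∀ i : ℕ, 1 ≤ i → i ≤ m → moment n C i = 0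

/-- Generalized binomial coefficient `C(z,j)` for real `z`. -/
noncomputable def gchoose (z : ℝ) (j : ℕ) : ℝ :=
  (∏ i ∈ Finset.range j, (z - (i : ℝ))) / (Nat.factorial j : ℝ)

/-- The Krawtchouk polynomial `K_i^{(m)}(z)` in the variable `z`. -/
noncomputable def krawK (m i : ℕ) (z : ℝ) : ℝ :=
  ∑ j ∈ Finset.range (i + 1), (-1 : ℝ) ^ j * gchoose z j * gchoose ((m : ℝ) - z) (i - j)

/-- The adjacent polynomial `Q_i^{1,1}(t) = K_i^{(n−2)}(n(1−t)/2 − 1) / ∑_{j=0}^i C(n−1,j)`. -/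
noncomputable def Q11 (n i : ℕ) (t : ℝ) : ℝ :=
  krawK (n - 2) i ((n : ℝ) * (1 - t) / 2 - 1) /
    (∑ j ∈ Finset.range (i + 1), ((n - 1).choose j : ℝ))

namespace St16

noncomputable def chr (b : ZMod 2) : ℝ := if b = 0 then 1 else -1

lemma chr_zero : chr 0 = 1 := by simp [chr]

lemma chr_add (a b : ZMod 2) : chr (a + b) = chr a * chr b := by
  rcases (show a = 0 ∨ a = 1 by revert a; decide) with rfl | rfl <;>
    rcases (show b = 0 ∨ b = 1 by revert b; decide) with rfl | rfl <;>
    simp only [chr, add_zero, zero_add, show (1+1 : ZMod 2) = 0 from rfl,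
      if_pos (rfl : (0 : ZMod 2) = 0), if_neg (show (1 : ZMod 2) ≠ 0 by decide)] <;> norm_num

lemma chr_sq (a : ZMod 2) : chr a * chr a = 1 := by
  fin_cases a <;> simp [chr] <;> split_ifs <;> simp_all

lemma chr_natCast (m : ℕ) : chr (m : ZMod 2) = (-1 : ℝ) ^ m := by
  induction m with
  | zero => simp [chr]
  | succ m ih =>
      push_cast
      rw [chr_add, ih, pow_succ]
      simp [chr]

lemma zmod2_add_one_add_one (a : ZMod 2) : a + 1 + 1 = a := by revert a; decide

def flip {n : ℕ} (z : Fin n → ZMod 2) (j : Fin n) : Fin n → ZMod 2 :=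
  Function.update z j (z j + 1)

lemma flip_apply_same {n : ℕ} (z : Fin n → ZMod 2) (j : Fin n) : flip z j j = z j + 1 := by
  simp [flip]

lemma flip_apply_ne {n : ℕ} (z : Fin n → ZMod 2) (j l : Fin n) (h : l ≠ j) :
    flip z j l = z l := by simp [flip, Function.update_of_ne h]

lemma flip_flip {n : ℕ} (z : Fin n → ZMod 2) (j : Fin n) : flip (flip z j) j = z := by
  funext l
  by_cases h : l = j
  · subst h; rw [flip_apply_same, flip_apply_same, zmod2_add_one_add_one]
  · rw [flip_apply_ne _ _ _ h, flip_apply_ne _ _ _ h]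

lemma zmod2_ne_zero_iff (a : ZMod 2) : a ≠ 0 ↔ a = 1 := by revert a; decide
lemma zmod2_add_one_ne_zero_iff (a : ZMod 2) : a + 1 ≠ 0 ↔ a = 0 := by revert a; decide
lemma zmod2_one_add_one : (1 : ZMod 2) + 1 = 0 := by decide

def sph (n i : ℕ) : Finset (Fin n → ZMod 2) := univ.filter (fun z => hammingNorm z = i)

lemma mem_sph {n i : ℕ} (z : Fin n → ZMod 2) : z ∈ sph n i ↔ hammingNorm z = i := by
  simp [sph]

lemma hammingNorm_eq_card {n : ℕ} (z : Fin n → ZMod 2) :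
    hammingNorm z = (univ.filter (fun l => z l ≠ 0)).card := rfl

lemma supp_flip_of_zero {n : ℕ} (z : Fin n → ZMod 2) (j : Fin n) (h : z j = 0) :
    (univ.filter (fun l => flip z j l ≠ 0)) = insert j (univ.filter (fun l => z l ≠ 0)) := by
  ext l
  by_cases hl : l = j
  · subst hl
    simp [flip_apply_same, zmod2_add_one_ne_zero_iff, h]
  · simp [flip_apply_ne _ _ _ hl, hl]

lemma wt_flip_of_zero {n : ℕ} (z : Fin n → ZMod 2) (j : Fin n) (h : z j = 0) :
    hammingNorm (flip z j) = hammingNorm z + 1 := by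
  rw [hammingNorm_eq_card (flip z j), supp_flip_of_zero z j h,
    card_insert_of_notMem (by simp [h]), hammingNorm_eq_card]

lemma wt_flip_of_one {n : ℕ} (z : Fin n → ZMod 2) (j : Fin n) (h : z j = 1) :
    hammingNorm z = hammingNorm (flip z j) + 1 := by
  have h0 : flip z j j = 0 := by rw [flip_apply_same, h, zmod2_one_add_one]
  have := wt_flip_of_zero (flip z j) j h0
  rwa [flip_flip] at this

lemma card_ones {n : ℕ} (z : Fin n → ZMod 2) :
    (univ.filter (fun l => z l = 1)).card = hammingNorm z := by
  rw [hammingNorm_eq_card]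
  congr 1
  ext l
  simp [zmod2_ne_zero_iff]

lemma card_zeros {n : ℕ} (z : Fin n → ZMod 2) :
    (univ.filter (fun l => z l = 0)).card = n - hammingNorm z := by
  have h := card_filter_add_card_filter_not (s := (univ : Finset (Fin n)))
    (p := fun l => z l = 0)
  simp only [card_univ, Fintype.card_fin] at h
  have h2 : (univ.filter (fun l => ¬ z l = 0)).card = hammingNorm z := rfl
  omega

lemma up_sum (n i : ℕ) (f : (Fin n → ZMod 2) → ℝ) :
    ∑ z ∈ sph n i, ∑ j ∈ univ.filter (fun j => z j = 0), f (flip z j)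
      = ((i : ℝ) + 1) * ∑ z ∈ sph n (i+1), f z := by
  have rhs : ∀ z ∈ sph n (i+1),
      ((i : ℝ) + 1) * f z = ∑ j ∈ univ.filter (fun j => z j = 1), f z := by
    intro z hz
    rw [sum_const, card_ones, (mem_sph z).1 hz]
    push_cast [nsmul_eq_mul]
    ring
  rw [mul_sum, sum_congr rfl rhs, sum_sigma', sum_sigma']
  apply sum_nbij' (i := fun p => (⟨flip p.1 p.2, p.2⟩ : Σ _ : Fin n → ZMod 2, Fin n))
    (j := fun p => (⟨flip p.1 p.2, p.2⟩ : Σ _ : Fin n → ZMod 2, Fin n))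
  · rintro ⟨z, j⟩ hp
    simp only [mem_sigma, mem_sph, mem_filter, mem_univ, true_and] at hp ⊢
    refine ⟨by rw [wt_flip_of_zero z j hp.2, hp.1], ?_⟩
    rw [flip_apply_same, hp.2, zero_add]
  · rintro ⟨z, j⟩ hp
    simp only [mem_sigma, mem_sph, mem_filter, mem_univ, true_and] at hp ⊢
    refine ⟨?_, by rw [flip_apply_same, hp.2, zmod2_one_add_one]⟩
    have := wt_flip_of_one z j hp.2
    omega
  · rintro ⟨z, j⟩ _
    rw [flip_flip]
  · rintro ⟨z, j⟩ _
    rw [flip_flip]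
  · rintro ⟨z, j⟩ _
    rfl

lemma down_sum (n i : ℕ) (f : (Fin n → ZMod 2) → ℝ) :
    ∑ z ∈ sph n (i+1), ∑ j ∈ univ.filter (fun j => z j = 1), f (flip z j)
      = ((n : ℝ) - (i : ℝ)) * ∑ z ∈ sph n i, f z := by
  by_cases hin : i + 1 ≤ n
  · have rhs : ∀ z ∈ sph n i,
        ((n : ℝ) - (i : ℝ)) * f z = ∑ j ∈ univ.filter (fun j => z j = 0), f z := by
      intro z hz
      rw [sum_const, card_zeros, (mem_sph z).1 hz, nsmul_eq_mul, Nat.cast_sub (by omega)]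
    rw [mul_sum, sum_congr rfl rhs, sum_sigma', sum_sigma']
    apply sum_nbij' (i := fun p => (⟨flip p.1 p.2, p.2⟩ : Σ _ : Fin n → ZMod 2, Fin n))
      (j := fun p => (⟨flip p.1 p.2, p.2⟩ : Σ _ : Fin n → ZMod 2, Fin n))
    · rintro ⟨z, j⟩ hp
      simp only [mem_sigma, mem_sph, mem_filter, mem_univ, true_and] at hp ⊢
      refine ⟨?_, by rw [flip_apply_same, hp.2, zmod2_one_add_one]⟩
      have := wt_flip_of_one z j hp.2
      omega
    · rintro ⟨z, j⟩ hp
      simp only [mem_sigma, mem_sph, mem_filter, mem_univ, true_and] at hp ⊢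
      refine ⟨by rw [wt_flip_of_zero z j hp.2, hp.1], ?_⟩
      rw [flip_apply_same, hp.2, zero_add]
    · rintro ⟨z, j⟩ _
      rw [flip_flip]
    · rintro ⟨z, j⟩ _
      rw [flip_flip]
    · rintro ⟨z, j⟩ _
      rfl
  · have hle : ∀ z : Fin n → ZMod 2, hammingNorm z ≤ n := by
      intro z
      rw [hammingNorm_eq_card]
      exact (card_filter_le _ _).trans (by simp)
    have h1 : sph n (i+1) = ∅ := by
      rw [eq_empty_iff_forall_notMem]
      intro z hz
      have := (mem_sph z).1 hz
      have := hle z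
      omega
    rw [h1, sum_empty]
    by_cases hi : i = n
    · subst hi; simp
    · have h2 : sph n i = ∅ := by
        rw [eq_empty_iff_forall_notMem]
        intro z hz
        have := (mem_sph z).1 hz
        have := hle z
        omega
      rw [h2, sum_empty, mul_zero]

def dot {n : ℕ} (z u : Fin n → ZMod 2) : ZMod 2 := ∑ j, z j * u j

/-- character sum over the sphere -/
noncomputable def cS (n : ℕ) (u : Fin n → ZMod 2) (i : ℕ) : ℝ :=
  ∑ z ∈ sph n i, chr (dot z u)

lemma dot_flip {n : ℕ} (z u : Fin n → ZMod 2) (j : Fin n) :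
    dot (flip z j) u = dot z u + u j := by
  unfold dot
  rw [← Finset.sum_erase_add _ _ (mem_univ j), ← Finset.sum_erase_add _ _ (mem_univ j)]
  rw [flip_apply_same, add_mul, one_mul, ← add_assoc]
  congr 1
  · congr 1
    apply sum_congr rfl
    intro l hl
    rw [flip_apply_ne _ _ _ (Finset.ne_of_mem_erase hl)]

lemma chr_u_sum {n : ℕ} (u : Fin n → ZMod 2) :
    ∑ j, chr (u j) = (n : ℝ) - 2 * (hammingNorm u : ℝ) := by
  rw [← sum_filter_add_sum_filter_not univ (fun j => u j = 0)]
  have h1 : ∀ j ∈ univ.filter (fun j => u j = 0), chr (u j) = 1 := by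
    intro j hj
    simp only [mem_filter] at hj
    rw [hj.2, chr_zero]
  have h2 : ∀ j ∈ univ.filter (fun j => ¬ u j = 0), chr (u j) = -1 := by
    intro j hj
    simp only [mem_filter] at hj
    simp [chr, hj.2]
  rw [sum_congr rfl h1, sum_congr rfl h2, sum_const, sum_const, card_zeros]
  have hc : (univ.filter (fun j => ¬ u j = 0)).card = hammingNorm u := by
    rw [hammingNorm_eq_card]
  rw [hc]
  have hle : hammingNorm u ≤ n := by
    rw [hammingNorm_eq_card]
    exact (card_filter_le _ _).trans (by simp)
  rw [nsmul_eq_mul, nsmul_eq_mul, Nat.cast_sub hle]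
  ring

/-- the three-term recurrence for the character sums -/
lemma cS_rec (n : ℕ) (u : Fin n → ZMod 2) (m : ℕ) :
    ((n : ℝ) - 2 * (hammingNorm u : ℝ)) * cS n u (m+1)
      = ((m : ℝ) + 2) * cS n u (m+2) + ((n : ℝ) - (m : ℝ)) * cS n u m := by
  have key : ∀ z : Fin n → ZMod 2, ∑ j, chr (dot (flip z j) u)
      = ((n : ℝ) - 2 * (hammingNorm u : ℝ)) * chr (dot z u) := by
    intro z
    have : ∀ j, chr (dot (flip z j) u) = chr (dot z u) * chr (u j) := by
      intro j
      rw [dot_flip, chr_add]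
    rw [Finset.sum_congr rfl (fun j _ => this j), ← Finset.mul_sum, chr_u_sum]
    ring
  have split : ∀ z : Fin n → ZMod 2, ∑ j, chr (dot (flip z j) u)
      = ∑ j ∈ univ.filter (fun j => z j = 0), chr (dot (flip z j) u)
        + ∑ j ∈ univ.filter (fun j => z j = 1), chr (dot (flip z j) u) := by
    intro z
    rw [← sum_filter_add_sum_filter_not univ (fun j => z j = 0)]
    congr 1
    apply sum_congr _ (fun _ _ => rfl)
    ext j
    simp only [mem_filter, mem_univ, true_and]
    constructor
    · intro h; revert h; generalize z j = a; revert a; decide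
    · intro h; rw [h]; decide
  calc ((n : ℝ) - 2 * (hammingNorm u : ℝ)) * cS n u (m+1)
      = ∑ z ∈ sph n (m+1), ∑ j, chr (dot (flip z j) u) := by
        rw [cS, mul_sum]
        exact (sum_congr rfl (fun z _ => (key z).symm)).symm ▸ rfl
    _ = ∑ z ∈ sph n (m+1), (∑ j ∈ univ.filter (fun j => z j = 0), chr (dot (flip z j) u)
          + ∑ j ∈ univ.filter (fun j => z j = 1), chr (dot (flip z j) u)) :=
        sum_congr rfl (fun z _ => split z)
    _ = ((m : ℝ) + 2) * cS n u (m+2) + ((n : ℝ) - (m : ℝ)) * cS n u m := by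
        rw [sum_add_distrib]
        congr 1
        · have := up_sum n (m+1) (fun z => chr (dot z u))
          rw [this, cS]
          push_cast
          ring_nf
        · exact down_sum n m (fun z => chr (dot z u))

lemma sph_zero (n : ℕ) : sph n 0 = {0} := by
  ext z
  simp only [sph, mem_filter, mem_univ, true_and, mem_singleton]
  exact hammingNorm_eq_zero

lemma dot_zero {n : ℕ} (u : Fin n → ZMod 2) : dot (0 : Fin n → ZMod 2) u = 0 := by
  simp [dot]

lemma cS_zero (n : ℕ) (u : Fin n → ZMod 2) : cS n u 0 = 1 := by
  rw [cS, sph_zero, sum_singleton, dot_zero, chr_zero]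

lemma cS_one (n : ℕ) (u : Fin n → ZMod 2) :
    cS n u 1 = (n : ℝ) - 2 * (hammingNorm u : ℝ) := by
  have h := up_sum n 0 (fun z => chr (dot z u))
  simp only [Nat.cast_zero, zero_add, one_mul] at h
  rw [cS, ← h, sph_zero, sum_singleton]
  have hf : (univ.filter (fun j => (0 : Fin n → ZMod 2) j = 0)) = univ := by
    apply filter_true_of_mem
    intro j _
    rfl
  rw [hf, ← chr_u_sum]
  apply sum_congr rfl
  intro j _
  rw [dot_flip, dot_zero, zero_add]

theorem cS_eq_kraw (n : ℕ) (u : Fin n → ZMod 2) :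
    ∀ i : ℕ, i ≤ n →
      cS n u i = (n.choose i : ℝ) * kraw n i (1 - 2 * (hammingNorm u : ℝ) / (n : ℝ)) := by
  set d : ℝ := (hammingNorm u : ℝ) with hd
  set t : ℝ := 1 - 2 * d / (n : ℝ) with ht
  intro i
  induction i using Nat.twoStepInduction with
  | zero =>
      intro _
      rw [cS_zero]
      simp [kraw]
  | one =>
      intro h1n
      have hn0 : (n : ℝ) ≠ 0 := by
        have : 0 < n := h1n
        positivity
      rw [cS_one, kraw]
      rw [Nat.choose_one_right]
      rw [ht]
      field_simp
      rw [hd]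
  | more m ihm ihm1 =>
      intro hm2n
      have hm1n : m + 1 ≤ n := by omega
      have hmn : m ≤ n := by omega
      have hn0 : (n : ℝ) ≠ 0 := by
        have : 0 < n := by omega
        positivity
      have h1 := ihm1 hm1n
      have h0 := ihm hmn
      have hrec := cS_rec n u m
      have hnt : (n : ℝ) * t = (n : ℝ) - 2 * d := by
        rw [ht]
        field_simp
      have hden : (n : ℝ) - ((m : ℝ) + 1) ≠ 0 := by
        have : (m : ℝ) + 2 ≤ (n : ℝ) := by exact_mod_cast hm2n
        nlinarith
      have hkr : kraw n (m+2) t * ((n : ℝ) - ((m : ℝ) + 1))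
          = (n : ℝ) * t * kraw n (m+1) t - ((m : ℝ) + 1) * kraw n m t := by
        show (((n : ℝ) * t * kraw n (m+1) t - ((m : ℝ) + 1) * kraw n m t)
          / ((n : ℝ) - ((m : ℝ) + 1))) * ((n : ℝ) - ((m : ℝ) + 1)) = _
        rw [div_mul_cancel₀ _ hden]
      have hc2 : ((m : ℝ) + 2) * (n.choose (m+2) : ℝ)
          = ((n : ℝ) - ((m : ℝ) + 1)) * (n.choose (m+1) : ℝ) := by
        have h := Nat.choose_succ_right_eq n (m+1)
        have h' := congrArg (Nat.cast : ℕ → ℝ) h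
        push_cast [Nat.cast_sub hm1n] at h'
        linarith
      have hc1 : ((m : ℝ) + 1) * (n.choose (m+1) : ℝ)
          = ((n : ℝ) - (m : ℝ)) * (n.choose m : ℝ) := by
        have h := Nat.choose_succ_right_eq n m
        have h' := congrArg (Nat.cast : ℕ → ℝ) h
        push_cast [Nat.cast_sub hmn] at h'
        linarith
      have hm20 : ((m : ℝ) + 2) ≠ 0 := by positivity
      apply mul_left_cancel₀ hm20
      linear_combination (-(1:ℝ)) * hrec + ((n : ℝ) - 2*d) * h1 - ((n:ℝ) - (m:ℝ)) * h0
        - ((n.choose (m+1) : ℝ) * kraw n (m+1) t) * hnt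
        + (kraw n m t) * hc1 - ((n.choose (m+1) : ℝ)) * hkr - (kraw n (m+2) t) * hc2

lemma dot_add {n : ℕ} (z x y : Fin n → ZMod 2) : dot z (x + y) = dot z x + dot z y := by
  unfold dot
  rw [← sum_add_distrib]
  apply sum_congr rfl
  intro j _
  show z j * (x j + y j) = _
  ring

lemma hammingDist_eq {n : ℕ} (x y : Fin n → ZMod 2) :
    hammingDist x y = hammingNorm (x + y) := by
  rw [hammingDist_eq_hammingNorm]
  congr 1
  funext j
  show -x j + y j = x j + y j
  rw [CharTwo.neg_eq]

lemma moment_eq (n i : ℕ) (hi : i ≤ n) (C : Finset (Fin n → ZMod 2)) :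
    (n.choose i : ℝ) * moment n C i
      = ∑ z ∈ sph n i, (∑ x ∈ C, chr (dot z x))^2 := by
  have step1 : (n.choose i : ℝ) * moment n C i = ∑ x ∈ C, ∑ y ∈ C, cS n (x + y) i := by
    rw [moment, mul_sum]
    apply sum_congr rfl
    intro x _
    rw [mul_sum]
    apply sum_congr rfl
    intro y _
    rw [cS_eq_kraw n (x + y) i hi, ip, hammingDist_eq]
  rw [step1]
  have step2 : ∀ x y : Fin n → ZMod 2,
      cS n (x + y) i = ∑ z ∈ sph n i, chr (dot z x) * chr (dot z y) := by
    intro x y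
    rw [cS]
    apply sum_congr rfl
    intro z _
    rw [dot_add, chr_add]
  calc ∑ x ∈ C, ∑ y ∈ C, cS n (x+y) i
      = ∑ x ∈ C, ∑ y ∈ C, ∑ z ∈ sph n i, chr (dot z x) * chr (dot z y) := by
        exact sum_congr rfl fun x _ => sum_congr rfl fun y _ => step2 x y
    _ = ∑ x ∈ C, ∑ z ∈ sph n i, ∑ y ∈ C, chr (dot z x) * chr (dot z y) := by
        exact sum_congr rfl fun x _ => Finset.sum_comm
    _ = ∑ z ∈ sph n i, ∑ x ∈ C, ∑ y ∈ C, chr (dot z x) * chr (dot z y) := Finset.sum_comm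
    _ = ∑ z ∈ sph n i, (∑ x ∈ C, chr (dot z x))^2 := by
        apply sum_congr rfl
        intro z _
        rw [sq, Finset.sum_mul_sum]

lemma char_sum_zero (n i : ℕ) (hi : i ≤ n) (C : Finset (Fin n → ZMod 2))
    (hm : moment n C i = 0) (z : Fin n → ZMod 2) (hz : hammingNorm z = i) :
    ∑ x ∈ C, chr (dot z x) = 0 := by
  have h := moment_eq n i hi C
  rw [hm, mul_zero] at h
  have hz' : z ∈ sph n i := by simp [sph, hz]
  have := (sum_eq_zero_iff_of_nonneg (fun w _ => sq_nonneg (∑ x ∈ C, chr (dot w x)))).1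
    h.symm z hz'
  exact pow_eq_zero_iff (by norm_num) |>.1 this

/-- orthogonal families are small -/
lemma orth_card_le {ι α : Type*} [Fintype ι] [Fintype α] [DecidableEq ι]
    (v : ι → α → ℝ)
    (horth : ∀ i j, i ≠ j → ∑ x, v i x * v j x = 0)
    (hpos : ∀ i, ∑ x, v i x * v i x ≠ 0) :
    Fintype.card ι ≤ Fintype.card α := by
  have hli : LinearIndependent ℝ v := by
    rw [Fintype.linearIndependent_iff]
    intro g hg j
    have h2 : ∑ x, (∑ i, g i • v i) x * v j x = 0 := by rw [hg]; simp
    have h3 : ∀ x, (∑ i, g i • v i) x = ∑ i, g i * v i x := by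
      intro x
      simp [Finset.sum_apply]
    have h4 : ∑ x, (∑ i, g i * v i x) * v j x = ∑ i, g i * ∑ x, v i x * v j x := by
      simp_rw [sum_mul, mul_assoc]
      rw [Finset.sum_comm]
      exact sum_congr rfl fun i _ => (mul_sum _ _ _).symm
    rw [sum_congr rfl (fun x _ => by rw [h3 x])] at h2
    rw [h4] at h2
    rw [Finset.sum_eq_single j (fun i _ hij => by rw [horth i j hij, mul_zero])
      (fun h => absurd (Finset.mem_univ j) h)] at h2
    exact (mul_eq_zero.1 h2).resolve_right (hpos j)
  have := hli.fintype_card_le_finrank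
  rwa [Module.finrank_pi ℝ] at this

lemma parity_binom (n : ℕ) (hn : 1 ≤ n) : ∀ k : ℕ,
    ∑ i ∈ range (k+1), (if i % 2 = k % 2 then n.choose i else 0)
      = ∑ i ∈ range (k+1), (n-1).choose i := by
  intro k
  induction k using Nat.twoStepInduction with
  | zero => simp
  | one =>
      simp only [sum_range_succ, sum_range_one, Nat.choose_zero_right, Nat.choose_one_right]
      norm_num
      omega
  | more m ih _ =>
      rw [sum_range_succ, sum_range_succ,
        sum_range_succ (f := fun i => (n-1).choose i) (n := m+2),
        sum_range_succ (f := fun i => (n-1).choose i) (n := m+1)]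
      have e1 : (m+2) % 2 = m % 2 := by omega
      have e2 : (m+1) % 2 ≠ (m+2) % 2 := by omega
      have e3 : ∀ i, (if i % 2 = (m+2) % 2 then n.choose i else 0)
          = (if i % 2 = m % 2 then n.choose i else 0) := by
        intro i
        rw [e1]
      rw [sum_congr rfl (fun i _ => e3 i), ih, if_neg e2, if_pos rfl]
      have pascal : n.choose (m+2) = (n-1).choose (m+1) + (n-1).choose (m+2) := by
        have : n = (n-1) + 1 := by omega
        rw [this]
        rw [Nat.choose_succ_succ]
        simp
      omega

lemma card_idx (n k : ℕ) :
    Fintype.card {S : Finset (Fin n) // S.card ≤ k ∧ S.card % 2 = k % 2}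
      = ∑ i ∈ range (k+1), (if i % 2 = k % 2 then n.choose i else 0) := by
  rw [Fintype.card_subtype]
  rw [card_eq_sum_card_fiberwise (f := fun S => S.card) (t := range (k+1))
    (fun S hS => by
      simp only [coe_filter, Set.mem_setOf_eq, mem_filter, mem_univ, true_and] at hS
      exact mem_range.2 (Nat.lt_succ_of_le hS.1))]
  apply sum_congr rfl
  intro i hi
  by_cases hpar : i % 2 = k % 2
  · rw [if_pos hpar]
    have : ((univ.filter (fun S : Finset (Fin n) => S.card ≤ k ∧ S.card % 2 = k % 2)).filter
        (fun S => S.card = i)) = univ.filter (fun S : Finset (Fin n) => S.card = i) := by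
      ext S
      simp only [mem_filter, mem_univ, true_and]
      constructor
      · exact fun h => h.2
      · intro h
        have hik := mem_range.1 hi
        refine ⟨⟨?_, ?_⟩, h⟩ <;> rw [h]
        · omega
        · exact hpar
    rw [this]
    have : univ.filter (fun S : Finset (Fin n) => S.card = i) = powersetCard i univ := by
      ext S
      simp [Finset.mem_powersetCard]
    rw [this, Finset.card_powersetCard, card_univ, Fintype.card_fin]
  · rw [if_neg hpar]
    rw [Finset.card_eq_zero, Finset.eq_empty_iff_forall_notMem]
    intro S hS
    simp only [mem_filter, mem_univ, true_and] at hS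
    have h2 : S.card = i := hS.2
    have h3 : S.card % 2 = k % 2 := hS.1.2
    omega

lemma chr_mul_chr_symmdiff {n : ℕ} (S T : Finset (Fin n)) (x : Fin n → ZMod 2) :
    chr (∑ j ∈ S, x j) * chr (∑ j ∈ T, x j)
      = chr (∑ j ∈ (S \ T) ∪ (T \ S), x j) := by
  rw [← chr_add]
  congr 1
  have hS : ∑ j ∈ S, x j = ∑ j ∈ S \ T, x j + ∑ j ∈ S ∩ T, x j := by
    rw [← sum_union (Finset.sdiff_disjoint.mono_right Finset.inter_subset_right),
      Finset.sdiff_union_inter]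
  have hT : ∑ j ∈ T, x j = ∑ j ∈ T \ S, x j + ∑ j ∈ T ∩ S, x j := by
    rw [← sum_union (Finset.sdiff_disjoint.mono_right Finset.inter_subset_right),
      Finset.sdiff_union_inter]
  rw [hS, hT, sum_union disjoint_sdiff_sdiff, Finset.inter_comm T S]
  have : ∀ a b c : ZMod 2, (a + c) + (b + c) = a + b := by decide
  exact this _ _ _

lemma dot_indicator {n : ℕ} (U : Finset (Fin n)) (x : Fin n → ZMod 2) :
    dot (fun j => if j ∈ U then 1 else 0) x = ∑ j ∈ U, x j := by
  unfold dot
  simp only [ite_mul, one_mul, zero_mul]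
  rw [Finset.sum_ite_mem univ U x, Finset.univ_inter]

lemma wt_indicator {n : ℕ} (U : Finset (Fin n)) :
    hammingNorm (fun j => if j ∈ U then (1 : ZMod 2) else 0) = U.card := by
  rw [hammingNorm_eq_card]
  congr 1
  ext j
  by_cases h : j ∈ U <;> simp [h]

end St16

open St16 in
/-- a tight `(k,k)`-design contains no pair of antipodal points. -/
theorem stmt_16 (n k : ℕ) (hn : 0 < n) (hk : 1 ≤ k) (hkn : 2 * k ≤ n)
    (C : Finset (Fin n → ZMod 2)) (hC : IsKKDesign n k C)
    (htight : C.card = ∑ i ∈ Finset.range (k + 1), (n - 1).choose i) :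
    ∀ x ∈ C, antip x ∉ C := by
  intro x0 hx0 hx1
  obtain ⟨hne, hdes⟩ := hC
  classical
  set x1 : Fin n → ZMod 2 := antip x0 with hx1def
  have hx01 : x0 ≠ x1 := by
    intro h
    have h2 := congrFun h ⟨0, hn⟩
    have hz : ∀ a : ZMod 2, a ≠ a + 1 := by decide
    exact hz _ h2
  -- vanishing character sums on even spheres
  have hchar : ∀ z : Fin n → ZMod 2, 2 ≤ hammingNorm z → hammingNorm z ≤ 2*k →
      hammingNorm z % 2 = 0 → ∑ x ∈ C, chr (dot z x) = 0 := by
    intro z h2 h2k hpar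
    obtain ⟨j, hj⟩ : ∃ j : ℕ, hammingNorm z = 2*j := ⟨hammingNorm z / 2, by omega⟩
    exact char_sum_zero n (2*j) (by omega) C (hdes j (by omega) (by omega)) z hj
  -- the vector family
  let I := {S : Finset (Fin n) // S.card ≤ k ∧ S.card % 2 = k % 2}
  let w : Option I → (Fin n → ZMod 2) → ℝ := fun o => match o with
    | none => fun x => (if x = x0 then (1:ℝ) else 0) + (-1:ℝ)^(k+1) * (if x = x1 then 1 else 0)
    | some S => fun x => chr (∑ j ∈ S.1, x j)
  have hw_some : ∀ (S : I) (x : Fin n → ZMod 2), w (some S) x = chr (∑ j ∈ S.1, x j) :=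
    fun S x => rfl
  have hw_none : ∀ x : Fin n → ZMod 2, w none x
      = (if x = x0 then (1:ℝ) else 0) + (-1:ℝ)^(k+1) * (if x = x1 then 1 else 0) :=
    fun x => rfl
  -- pairwise orthogonality over C
  have hsome : ∀ S T : I, S ≠ T → ∑ x ∈ C, w (some S) x * w (some T) x = 0 := by
    intro S T hST
    have hstep : ∀ x : Fin n → ZMod 2, w (some S) x * w (some T) x
        = chr (dot (fun j => if j ∈ (S.1 \ T.1) ∪ (T.1 \ S.1) then 1 else 0) x) := by
      intro x
      rw [hw_some, hw_some, chr_mul_chr_symmdiff, dot_indicator]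
    rw [sum_congr rfl (fun x _ => hstep x)]
    set U := (S.1 \ T.1) ∪ (T.1 \ S.1) with hU
    have hc1 := Finset.card_sdiff_add_card_inter S.1 T.1
    have hc2 := Finset.card_sdiff_add_card_inter T.1 S.1
    have hcu : U.card = (S.1 \ T.1).card + (T.1 \ S.1).card :=
      Finset.card_union_of_disjoint disjoint_sdiff_sdiff
    have hinter : (T.1 ∩ S.1).card = (S.1 ∩ T.1).card := by rw [Finset.inter_comm]
    have hUne : U ≠ ∅ := by
      intro h0
      rw [Finset.union_eq_empty] at h0
      exact hST (Subtype.ext (Finset.Subset.antisymm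
        (Finset.sdiff_eq_empty_iff_subset.1 h0.1) (Finset.sdiff_eq_empty_iff_subset.1 h0.2)))
    have hUcard : U.card ≠ 0 := fun h => hUne (Finset.card_eq_zero.1 h)
    have hSk := S.2.1
    have hSp := S.2.2
    have hTk := T.2.1
    have hTp := T.2.2
    apply hchar
    · rw [wt_indicator]; omega
    · rw [wt_indicator]; omega
    · rw [wt_indicator]; omega
  have hmix : ∀ S : I, ∑ x ∈ C, w none x * w (some S) x = 0 := by
    intro S
    have hsplit : ∀ x : Fin n → ZMod 2, w none x * w (some S) x
        = (if x = x0 then chr (∑ j ∈ S.1, x j) else 0)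
          + (-1:ℝ)^(k+1) * (if x = x1 then chr (∑ j ∈ S.1, x j) else 0) := by
      intro x
      rw [hw_none, hw_some]
      by_cases h0 : x = x0 <;> by_cases h1 : x = x1 <;> simp [h0, h1] <;> split_ifs <;> ring
    rw [sum_congr rfl (fun x _ => hsplit x), sum_add_distrib, ← mul_sum,
      Finset.sum_ite_eq' C x0 _, Finset.sum_ite_eq' C x1 _, if_pos hx0, if_pos hx1]
    have hanti : chr (∑ j ∈ S.1, x1 j) = chr (∑ j ∈ S.1, x0 j) * (-1:ℝ)^(S.1.card) := by
      have hs : ∑ j ∈ S.1, x1 j = ∑ j ∈ S.1, x0 j + (S.1.card : ZMod 2) := by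
        show ∑ j ∈ S.1, (x0 j + 1) = _
        rw [Finset.sum_add_distrib, Finset.sum_const, nsmul_eq_mul, mul_one]
      rw [hs, chr_add, chr_natCast]
    rw [hanti]
    have hodd : Odd (k + 1 + S.1.card) := by
      have := S.2.2
      rw [Nat.odd_iff]
      omega
    have hneg : (-1:ℝ)^(k+1) * ((-1:ℝ)^(S.1.card)) = -1 := by
      rw [← pow_add]
      exact Odd.neg_one_pow hodd
    linear_combination (chr (∑ j ∈ S.1, x0 j)) * hneg
  have horthC : ∀ o p : Option I, o ≠ p → ∑ x ∈ C, w o x * w p x = 0 := by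
    intro o p hop
    match o, p with
    | none, none => exact absurd rfl hop
    | none, some S => exact hmix S
    | some S, none =>
        rw [sum_congr rfl (fun x _ => mul_comm (w (some S) x) (w none x))]
        exact hmix S
    | some S, some T => exact hsome S T (by intro h; exact hop (by rw [h]))
  -- nonzero norms
  have hCcard : 0 < C.card := Finset.card_pos.2 hne
  have hposC : ∀ o : Option I, ∑ x ∈ C, w o x * w o x ≠ 0 := by
    intro o
    match o with
    | some S =>
        have hval : ∀ x ∈ C, w (some S) x * w (some S) x = 1 := by
          intro x _
          rw [hw_some]
          exact chr_sq _
        rw [sum_congr rfl hval, sum_const, nsmul_eq_mul, mul_one]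
        exact Nat.cast_ne_zero.2 (by omega)
    | none =>
        have hcsq : ((-1:ℝ)^(k+1)) * ((-1:ℝ)^(k+1)) = 1 := by
          rw [← pow_add]
          exact Even.neg_one_pow ⟨k+1, by ring⟩
        have hval : ∀ x ∈ C, w none x * w none x
            = (if x = x0 then (1:ℝ) else 0) + (if x = x1 then (1:ℝ) else 0) := by
          intro x _
          rw [hw_none]
          by_cases h0 : x = x0 <;> by_cases h1 : x = x1
          · exact absurd (h0.symm.trans h1) hx01
          · simp [h0, h1, hx01]
          · subst h1
            rw [if_neg (Ne.symm hx01), if_pos rfl]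
            ring_nf
            rw [show k*2 = 2*k by ring, pow_mul]
            norm_num
          · simp [h0, h1]
        rw [sum_congr rfl hval, sum_add_distrib,
          Finset.sum_ite_eq' C x0 _, Finset.sum_ite_eq' C x1 _, if_pos hx0, if_pos hx1]
        norm_num
  -- dimension bound
  have hcard := orth_card_le (ι := Option I) (α := {x // x ∈ C})
    (fun o x => w o (x : Fin n → ZMod 2))
    (fun o p hop => by
      rw [Finset.sum_coe_sort C (fun x => w o x * w p x)]
      exact horthC o p hop)
    (fun o => by
      rw [Finset.sum_coe_sort C (fun x => w o x * w o x)]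
      exact hposC o)
  rw [Fintype.card_option, Fintype.card_coe] at hcard
  have hI : Fintype.card I = C.card := by
    rw [card_idx n k, parity_binom n (by omega) k, htight]
  omega
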